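/- Let w > 0, A₀ > 0, σ > 0 and s ∈ ℝ², and let d ∈ ℝ² have the centered bivariate Gaussian density g(d) = (1/(2πσ²))·exp(−‖d‖²/(2σ²)). Define the pointing loss Z = A₀·exp(−2‖s+d‖²/w²). Then for every z₀ with 0 < z₀ ≤ A₀, the probability ∫_{{d ∈ ℝ² : A₀ exp(−2‖s+d‖²/w²) ≤ z₀}} g(d) dd equals ∫₀^{z₀} (w²/(4σ²)) · (1/z) · (z/A₀)^{w²/(4σ²)} · exp(−‖s‖²/(2σ²)) · [(1/(2π)) ∫₀^{2π} exp((‖s‖/σ²)·√(−(w²/2)·ln(z/A₀)) · cos θ) dθ] dz; that is, Z has probability density f_Z(z) = (w²/(4σ²))·(1/z)·(z/A₀)^{w²/(4σ²)}·e^{−‖s‖²/(2σ²)}·I₀((‖s‖/σ²)√(−(w²/2)ln(z/A₀))) on 0 ≤ z ≤ A₀. -/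

import Mathlib

open Real MeasureTheory Set


lemma bessel_shift (p q : ℝ) :
    (∫ θ in (-π)..π, Real.exp (p * Real.cos θ + q * Real.sin θ)) =
    ∫ θ in (0:ℝ)..(2*π), Real.exp (Real.sqrt (p^2+q^2) * Real.cos θ) := by
  have hper : ∀ ρ : ℝ, Function.Periodic (fun θ => Real.exp (ρ * Real.cos θ)) (2*π) := by
    intro ρ θ
    simp [Real.cos_add_two_pi]
  rcases eq_or_lt_of_le (Real.sqrt_nonneg (p^2+q^2)) with h0 | hρpos
  · have hpq : p = 0 ∧ q = 0 := by
      have h1 : p^2 + q^2 = 0 := by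
        have := Real.sqrt_eq_zero'.mp h0.symm
        nlinarith [sq_nonneg p, sq_nonneg q]
      constructor <;> nlinarith [sq_nonneg p, sq_nonneg q]
    rw [hpq.1, hpq.2]
    norm_num [intervalIntegral.integral_const]
    ring
  · set ρ := Real.sqrt (p^2+q^2) with hρ
    set z : ℂ := (p : ℂ) + (q : ℂ) * Complex.I with hz
    have habs : ‖z‖ = ρ := by
      rw [hz, Complex.norm_add_mul_I, hρ]
    have hzne : z ≠ 0 := by
      intro h
      rw [h] at habs
      simp at habs
      exact absurd habs.symm (ne_of_gt hρpos)
    set φ := Complex.arg z with hφ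
    have hcos : Real.cos φ = p / ρ := by
      rw [hφ, Complex.cos_arg hzne, habs, hz]; simp
    have hsin : Real.sin φ = q / ρ := by
      rw [hφ, Complex.sin_arg, habs, hz]; simp
    have hp' : p = ρ * Real.cos φ := by rw [hcos]; field_simp
    have hq' : q = ρ * Real.sin φ := by rw [hsin]; field_simp
    calc (∫ θ in (-π)..π, Real.exp (p * Real.cos θ + q * Real.sin θ))
        = ∫ θ in (-π)..π, Real.exp (ρ * Real.cos (θ - φ)) := by
          apply intervalIntegral.integral_congr
          intro θ _
          simp only []
          rw [Real.cos_sub]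
          rw [hp', hq']; ring_nf
      _ = ∫ θ in (-π - φ)..(π - φ), Real.exp (ρ * Real.cos θ) :=
          intervalIntegral.integral_comp_sub_right (fun θ => Real.exp (ρ * Real.cos θ)) φ
      _ = ∫ θ in (0:ℝ)..(2*π), Real.exp (ρ * Real.cos θ) := by
          have := (hper ρ).intervalIntegral_add_eq (-π - φ) 0
          rw [zero_add] at this
          rw [← this]
          congr 1
          ring

lemma aux_inner (w A₀ σ : ℝ) (hw : 0 < w) (hA : 0 < A₀) (hσ : 0 < σ) (s : ℝ × ℝ)
    (r : ℝ) (hr0 : 0 < r) :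
    (∫ θ in Ioo (-π) π,
        r * ((1 / (2 * π * σ ^ 2)) *
          Real.exp (-((((r * Real.cos θ, r * Real.sin θ) - s).1) ^ 2 +
            (((r * Real.cos θ, r * Real.sin θ) - s).2) ^ 2) / (2 * σ ^ 2))))
      = |A₀ * Real.exp (-(2 * r ^ 2) / w ^ 2) * (-(4 * r) / w ^ 2)| •
        ((w ^ 2 / (4 * σ ^ 2)) * (1 / (A₀ * Real.exp (-(2 * r ^ 2) / w ^ 2))) *
          ((A₀ * Real.exp (-(2 * r ^ 2) / w ^ 2)) / A₀) ^ (w ^ 2 / (4 * σ ^ 2)) *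
          Real.exp (-(s.1 ^ 2 + s.2 ^ 2) / (2 * σ ^ 2)) *
          ((1 / (2 * π)) * ∫ θ in (0 : ℝ)..(2 * π),
            Real.exp ((Real.sqrt (s.1 ^ 2 + s.2 ^ 2) / σ ^ 2) *
              Real.sqrt (-(w ^ 2 / 2) *
                Real.log ((A₀ * Real.exp (-(2 * r ^ 2) / w ^ 2)) / A₀)) * Real.cos θ))) := by
  have hσ2 : (0:ℝ) < σ ^ 2 := by positivity
  have hw2 : (0:ℝ) < w ^ 2 := by positivity
  have hπ : (0:ℝ) < π := Real.pi_pos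
  have key : ∀ θ : ℝ,
      r * ((1 / (2 * π * σ ^ 2)) *
          Real.exp (-((((r * Real.cos θ, r * Real.sin θ) - s).1) ^ 2 +
            (((r * Real.cos θ, r * Real.sin θ) - s).2) ^ 2) / (2 * σ ^ 2)))
      = (r * (1 / (2 * π * σ ^ 2)) *
          Real.exp (-(r ^ 2 + (s.1 ^ 2 + s.2 ^ 2)) / (2 * σ ^ 2))) *
          Real.exp ((r * s.1 / σ ^ 2) * Real.cos θ + (r * s.2 / σ ^ 2) * Real.sin θ) := by
    intro θ
    have h1 : (((r * Real.cos θ, r * Real.sin θ) : ℝ × ℝ) - s).1 = r * Real.cos θ - s.1 := rfl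
    have h2 : (((r * Real.cos θ, r * Real.sin θ) : ℝ × ℝ) - s).2 = r * Real.sin θ - s.2 := rfl
    rw [h1, h2]
    rw [show -((r * Real.cos θ - s.1) ^ 2 + (r * Real.sin θ - s.2) ^ 2) / (2 * σ ^ 2)
        = -(r ^ 2 + (s.1 ^ 2 + s.2 ^ 2)) / (2 * σ ^ 2)
          + ((r * s.1 / σ ^ 2) * Real.cos θ + (r * s.2 / σ ^ 2) * Real.sin θ) from by
      linear_combination (-(r ^ 2) / (2 * σ ^ 2)) * Real.sin_sq_add_cos_sq θ]
    rw [Real.exp_add]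
    ring
  rw [setIntegral_congr_fun measurableSet_Ioo (fun θ _ => key θ), integral_const_mul,
    ← integral_Ioc_eq_integral_Ioo, ← intervalIntegral.integral_of_le (by linarith : -π ≤ π),
    bessel_shift]
  have hsqrt1 : Real.sqrt (-(w ^ 2 / 2) *
      Real.log ((A₀ * Real.exp (-(2 * r ^ 2) / w ^ 2)) / A₀)) = r := by
    rw [mul_div_cancel_left₀ _ hA.ne', Real.log_exp,
      show -(w ^ 2 / 2) * (-(2 * r ^ 2) / w ^ 2) = r ^ 2 by field_simp]
    exact Real.sqrt_sq hr0.le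
  have hBeq : (∫ θ in (0:ℝ)..(2*π),
        Real.exp (Real.sqrt ((r * s.1 / σ ^ 2) ^ 2 + (r * s.2 / σ ^ 2) ^ 2) * Real.cos θ))
      = ∫ θ in (0 : ℝ)..(2 * π),
            Real.exp ((Real.sqrt (s.1 ^ 2 + s.2 ^ 2) / σ ^ 2) *
              Real.sqrt (-(w ^ 2 / 2) *
                Real.log ((A₀ * Real.exp (-(2 * r ^ 2) / w ^ 2)) / A₀)) * Real.cos θ) := by
    have harg : Real.sqrt ((r * s.1 / σ ^ 2) ^ 2 + (r * s.2 / σ ^ 2) ^ 2)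
        = Real.sqrt (s.1 ^ 2 + s.2 ^ 2) / σ ^ 2 * r := by
      rw [show (r * s.1 / σ ^ 2) ^ 2 + (r * s.2 / σ ^ 2) ^ 2
          = (r / σ ^ 2) ^ 2 * (s.1 ^ 2 + s.2 ^ 2) from by ring,
        Real.sqrt_mul (sq_nonneg _), Real.sqrt_sq (by positivity)]
      ring
    rw [hsqrt1, harg]
  rw [hBeq]
  have hpow : ((A₀ * Real.exp (-(2 * r ^ 2) / w ^ 2)) / A₀) ^ (w ^ 2 / (4 * σ ^ 2))
      = Real.exp (-(r ^ 2) / (2 * σ ^ 2)) := by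
    rw [mul_div_cancel_left₀ _ hA.ne', ← Real.exp_mul]
    congr 1
    field_simp
    ring
  have habs : |A₀ * Real.exp (-(2 * r ^ 2) / w ^ 2) * (-(4 * r) / w ^ 2)|
      = A₀ * Real.exp (-(2 * r ^ 2) / w ^ 2) * ((4 * r) / w ^ 2) := by
    rw [abs_mul, abs_of_pos (mul_pos hA (Real.exp_pos _)), abs_div, abs_neg,
      abs_of_pos (by positivity : (0:ℝ) < 4 * r), abs_of_pos hw2]
  rw [smul_eq_mul, habs, hpow,
    show -(r ^ 2 + (s.1 ^ 2 + s.2 ^ 2)) / (2 * σ ^ 2)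
      = -(r ^ 2) / (2 * σ ^ 2) + -(s.1 ^ 2 + s.2 ^ 2) / (2 * σ ^ 2) by ring,
    Real.exp_add]
  field_simp

lemma aux_phi_eq (w A₀ z : ℝ) (hw2 : 0 < w ^ 2) (hA : 0 < A₀) (hz : 0 < z)
    (hlog : 0 ≤ Real.log (A₀ / z)) :
    A₀ * Real.exp (-(2 * Real.sqrt (w ^ 2 / 2 * Real.log (A₀ / z)) ^ 2) / w ^ 2) = z := by
  rw [Real.sq_sqrt (mul_nonneg (by positivity) hlog),
    show -(2 * (w ^ 2 / 2 * Real.log (A₀ / z))) / w ^ 2 = Real.log (z / A₀) by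
      rw [Real.log_div hz.ne' hA.ne', div_eq_iff hw2.ne', Real.log_div hA.ne' hz.ne']; ring,
    Real.exp_log (by positivity), mul_comm, div_mul_cancel₀ z hA.ne']

lemma aux_hasDeriv (w A₀ r : ℝ) :
    HasDerivAt (fun x : ℝ => A₀ * Real.exp (-(2 * x ^ 2) / w ^ 2))
      (A₀ * Real.exp (-(2 * r ^ 2) / w ^ 2) * (-(4 * r) / w ^ 2)) r := by
  have h1 : HasDerivAt (fun x : ℝ => -(2 * x ^ 2) / w ^ 2) (-(4 * r) / w ^ 2) r := by
    have h2 := ((hasDerivAt_pow 2 r).const_mul (-2 : ℝ)).div_const (w ^ 2)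
    convert h2 using 2
    · rfl
    · rfl
    · ring
    · norm_num; ring
  have := (h1.exp).const_mul A₀
  convert this using 1
  · rfl
  · rfl
  ring

/-- The pointing loss `Z = A₀ exp(-2‖s+d‖²/w²)` of a corner-cube reflector with
boresight displacement `s`, under a centered Gaussian beam displacement `d`, has
the Rician-type density of eq. (16) of the paper. -/
theorem pointing_loss_density
    (w A₀ σ : ℝ) (hw : 0 < w) (hA : 0 < A₀) (hσ : 0 < σ) (s : ℝ × ℝ)
    (z₀ : ℝ) (hz₀ : 0 < z₀) (hz₀A : z₀ ≤ A₀) :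
    (∫ d in {d : ℝ × ℝ |
        A₀ * Real.exp (-(2 * ((s.1 + d.1) ^ 2 + (s.2 + d.2) ^ 2)) / w ^ 2) ≤ z₀},
        (1 / (2 * π * σ ^ 2)) * Real.exp (-(d.1 ^ 2 + d.2 ^ 2) / (2 * σ ^ 2))) =
      ∫ z in (0 : ℝ)..z₀,
        (w ^ 2 / (4 * σ ^ 2)) * (1 / z) * (z / A₀) ^ (w ^ 2 / (4 * σ ^ 2)) *
          Real.exp (-(s.1 ^ 2 + s.2 ^ 2) / (2 * σ ^ 2)) *
            ((1 / (2 * π)) * ∫ θ in (0 : ℝ)..(2 * π),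
              Real.exp ((Real.sqrt (s.1 ^ 2 + s.2 ^ 2) / σ ^ 2) *
                Real.sqrt (-(w ^ 2 / 2) * Real.log (z / A₀)) * Real.cos θ)) := by
  have hw2 : (0:ℝ) < w ^ 2 := by positivity
  have hσ2 : (0:ℝ) < σ ^ 2 := by positivity
  set c : ℝ := 1 / (2 * π * σ ^ 2) with hc
  set G : ℝ × ℝ → ℝ := fun d => c * Real.exp (-(d.1 ^ 2 + d.2 ^ 2) / (2 * σ ^ 2)) with hG
  set R2 : ℝ := w ^ 2 / 2 * Real.log (A₀ / z₀) with hR2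
  have hR2nn : 0 ≤ R2 := by
    apply mul_nonneg (by positivity)
    apply Real.log_nonneg
    rw [le_div_iff₀ hz₀]; linarith
  set R : ℝ := Real.sqrt R2 with hR
  have hRnn : 0 ≤ R := Real.sqrt_nonneg _
  have hRsq : R ^ 2 = R2 := Real.sq_sqrt hR2nn
  set T : Set (ℝ × ℝ) := {u | R2 ≤ u.1 ^ 2 + u.2 ^ 2} with hT
  have hTmeas : MeasurableSet T := by
    apply measurableSet_le measurable_const
    fun_prop
  set F : ℝ × ℝ → ℝ := T.indicator (fun u => G (u - s)) with hF
  set φf : ℝ → ℝ := fun r => A₀ * Real.exp (-(2 * r ^ 2) / w ^ 2) with hφf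
  set φd : ℝ → ℝ := fun r => A₀ * Real.exp (-(2 * r ^ 2) / w ^ 2) * (-(4 * r) / w ^ 2) with hφd
  set ψ : ℝ → ℝ := fun z =>
        (w ^ 2 / (4 * σ ^ 2)) * (1 / z) * (z / A₀) ^ (w ^ 2 / (4 * σ ^ 2)) *
          Real.exp (-(s.1 ^ 2 + s.2 ^ 2) / (2 * σ ^ 2)) *
            ((1 / (2 * π)) * ∫ θ in (0 : ℝ)..(2 * π),
              Real.exp ((Real.sqrt (s.1 ^ 2 + s.2 ^ 2) / σ ^ 2) *
                Real.sqrt (-(w ^ 2 / 2) * Real.log (z / A₀)) * Real.cos θ)) with hψ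
  -- integrability of G
  have hGint : Integrable G := by
    have hb : (0:ℝ) < 1 / (2 * σ ^ 2) := by positivity
    have h2 : G = fun d : ℝ × ℝ =>
        c * (Real.exp (-(1/(2*σ^2)) * d.1 ^ 2) * Real.exp (-(1/(2*σ^2)) * d.2 ^ 2)) := by
      funext d
      simp only [hG]
      rw [← Real.exp_add]
      congr 1
      ring
    rw [h2, Measure.volume_eq_prod]
    exact ((integrable_exp_neg_mul_sq hb).mul_prod (integrable_exp_neg_mul_sq hb)).const_mul c
  have hFint : Integrable F := (hGint.comp_sub_right s).indicator hTmeas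
  -- step 1 : translate
  have h1 : (∫ d in {d : ℝ × ℝ |
        A₀ * Real.exp (-(2 * ((s.1 + d.1) ^ 2 + (s.2 + d.2) ^ 2)) / w ^ 2) ≤ z₀}, G d)
      = ∫ u, F u := by
    have hsetEq : {d : ℝ × ℝ |
        A₀ * Real.exp (-(2 * ((s.1 + d.1) ^ 2 + (s.2 + d.2) ^ 2)) / w ^ 2) ≤ z₀}
        = {d : ℝ × ℝ | R2 ≤ (s.1 + d.1) ^ 2 + (s.2 + d.2) ^ 2} := by
      ext d
      simp only [mem_setOf_eq]
      rw [mul_comm, ← le_div_iff₀ hA, ← Real.le_log_iff_exp_le (by positivity),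
        Real.log_div hz₀.ne' hA.ne', hR2, Real.log_div hA.ne' hz₀.ne', div_le_iff₀ hw2]
      constructor <;> intro h <;> nlinarith
    have hSm : MeasurableSet {d : ℝ × ℝ | R2 ≤ (s.1 + d.1) ^ 2 + (s.2 + d.2) ^ 2} := by
      apply measurableSet_le measurable_const
      fun_prop
    rw [hsetEq, ← integral_indicator hSm,
      ← integral_sub_right_eq_self ({d : ℝ × ℝ | R2 ≤ (s.1 + d.1) ^ 2 + (s.2 + d.2) ^ 2}.indicator G) s]
    congr 1
    funext x
    simp only [hF, Set.indicator_apply, mem_setOf_eq, hT]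
    have hmem : (R2 ≤ (s.1 + (x - s).1) ^ 2 + (s.2 + (x - s).2) ^ 2) ↔ (R2 ≤ x.1 ^ 2 + x.2 ^ 2) := by
      simp only [Prod.fst_sub, Prod.snd_sub]
      constructor <;> intro h <;> [nlinarith; nlinarith]
    by_cases hx : R2 ≤ x.1 ^ 2 + x.2 ^ 2
    · rw [if_pos (hmem.mpr hx), if_pos hx]
    · rw [if_neg (fun h => hx (hmem.mp h)), if_neg hx]
  -- step 2 : polar coordinates
  have h2 : (∫ u, F u) = ∫ p in polarCoord.target, p.1 • F (polarCoord.symm p) :=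
    (integral_comp_polarCoord_symm F).symm
  -- integrability for Fubini
  have hI : IntegrableOn (fun p : ℝ × ℝ => p.1 • F (polarCoord.symm p)) polarCoord.target := by
    have hinj : Set.InjOn polarCoord.symm polarCoord.target := polarCoord.symm.injOn
    have himg : polarCoord.symm '' polarCoord.target = polarCoord.source :=
      polarCoord.symm_image_target_eq_source
    have hiff := integrableOn_image_iff_integrableOn_abs_det_fderiv_smul volume
      polarCoord.open_target.measurableSet
      (fun p _ => (hasFDerivAt_polarCoord_symm p).hasFDerivWithinAt) hinj F
    rw [himg] at hiff
    have hI0 := hiff.mp hFint.integrableOn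
    have B_det : ∀ p : ℝ × ℝ, (LinearMap.toContinuousLinearMap (Matrix.toLin
        (Module.Basis.finTwoProd ℝ) (Module.Basis.finTwoProd ℝ)
        !![Real.cos p.2, -p.1 * Real.sin p.2; Real.sin p.2, p.1 * Real.cos p.2])).det = p.1 := by
      intro p
      conv_rhs => rw [← one_mul p.1, ← Real.cos_sq_add_sin_sq p.2]
      simp only [neg_mul, LinearMap.det_toContinuousLinearMap, LinearMap.det_toLin,
        Matrix.det_fin_two_of, sub_neg_eq_add]
      ring
    refine hI0.congr_fun (fun p hp => ?_) polarCoord.open_target.measurableSet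
    simp only [det_fderivPolarCoordSymm]
    rw [abs_of_pos hp.1]
  have h3 : (∫ p in polarCoord.target, p.1 • F (polarCoord.symm p))
      = ∫ r in Ioi (0:ℝ), ∫ θ in Ioo (-π) π, r • F (polarCoord.symm (r, θ)) := by
    rw [polarCoord_target] at hI ⊢
    rw [Measure.volume_eq_prod]  -- ?
    exact setIntegral_prod _ hI
  have h4 : (∫ r in Ioi (0:ℝ), ∫ θ in Ioo (-π) π, r • F (polarCoord.symm (r, θ)))
      = ∫ r in Ioi (0:ℝ), (Ici R).indicator
          (fun r => ∫ θ in Ioo (-π) π, r * G ((r * Real.cos θ, r * Real.sin θ) - s)) r := by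
    apply setIntegral_congr_fun measurableSet_Ioi
    intro r hr
    have hr0 : (0:ℝ) < r := hr
    have hsymm : ∀ θ : ℝ, polarCoord.symm (r, θ) = (r * Real.cos θ, r * Real.sin θ) := by
      intro θ; rfl
    have hcond : ∀ θ : ℝ, (((r * Real.cos θ, r * Real.sin θ) : ℝ × ℝ) ∈ T) ↔ R ≤ r := by
      intro θ
      simp only [hT, mem_setOf_eq]
      rw [show (r * Real.cos θ) ^ 2 + (r * Real.sin θ) ^ 2 = r ^ 2 by
        linear_combination r ^ 2 * (Real.sin_sq_add_cos_sq θ)]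
      constructor
      · intro h
        calc R = Real.sqrt R2 := rfl
          _ ≤ Real.sqrt (r ^ 2) := Real.sqrt_le_sqrt h
          _ = r := Real.sqrt_sq hr0.le
      · intro h
        calc R2 = R ^ 2 := hRsq.symm
          _ ≤ r ^ 2 := by nlinarith
    by_cases hRr : R ≤ r
    · rw [Set.indicator_of_mem (Set.mem_Ici.mpr hRr)]
      apply setIntegral_congr_fun measurableSet_Ioo
      intro θ _
      show r • F (polarCoord.symm (r, θ)) = r * G ((r * Real.cos θ, r * Real.sin θ) - s)
      rw [hsymm θ, hF, Set.indicator_of_mem ((hcond θ).mpr hRr), smul_eq_mul]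
    · rw [Set.indicator_of_notMem (by simpa using hRr)]
      have hz : ∀ θ : ℝ, F (polarCoord.symm (r, θ)) = 0 := fun θ => by
        rw [hsymm θ, hF, Set.indicator_of_notMem (fun h => hRr ((hcond θ).mp h))]
      simp only [hz, smul_zero, integral_zero]
  have h5 : (∫ r in Ioi (0:ℝ), (Ici R).indicator
          (fun r => ∫ θ in Ioo (-π) π, r * G ((r * Real.cos θ, r * Real.sin θ) - s)) r)
      = ∫ r in Ioi R, ∫ θ in Ioo (-π) π, r * G ((r * Real.cos θ, r * Real.sin θ) - s) := by
    rw [setIntegral_indicator measurableSet_Ici]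
    apply setIntegral_congr_set
    rcases eq_or_lt_of_le hRnn with h | h
    · rw [← h, Set.inter_eq_left.mpr Set.Ioi_subset_Ici_self]
      exact Filter.EventuallyEq.rfl
    · have hss : Ioi (0:ℝ) ∩ Ici R = Ici R :=
        Set.inter_eq_right.mpr (fun x hx => h.trans_le hx)
      rw [hss]
      exact (Ioi_ae_eq_Ici).symm
  have h6 : ∀ r ∈ Ioi R,
      (∫ θ in Ioo (-π) π, r * G ((r * Real.cos θ, r * Real.sin θ) - s)) = |φd r| • ψ (φf r) :=
    fun r hr => aux_inner w A₀ σ hw hA hσ s r (lt_of_le_of_lt hRnn hr)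
  have h7 : (∫ r in Ioi R, ∫ θ in Ioo (-π) π, r * G ((r * Real.cos θ, r * Real.sin θ) - s))
      = ∫ r in Ioi R, |φd r| • ψ (φf r) :=
    setIntegral_congr_fun measurableSet_Ioi h6
  have hanti : StrictAntiOn φf (Ici 0) := by
    intro a ha b hb hab
    simp only [hφf]
    apply mul_lt_mul_of_pos_left _ hA
    apply Real.exp_lt_exp.mpr
    rw [div_lt_div_iff_of_pos_right hw2]
    simp only [mem_Ici] at ha
    nlinarith
  have hφR : φf R = z₀ :=
    aux_phi_eq w A₀ z₀ hw2 hA hz₀ (Real.log_nonneg ((one_le_div hz₀).mpr hz₀A))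
  have h8 : φf '' Ioi R = Ioo 0 z₀ := by
    ext z
    constructor
    · rintro ⟨r, hr, rfl⟩
      have hr' : R < r := hr
      constructor
      · exact mul_pos hA (Real.exp_pos _)
      · rw [← hφR]
        exact hanti (mem_Ici.mpr hRnn) (mem_Ici.mpr (hRnn.trans hr'.le)) hr'
    · rintro ⟨hz1, hz2⟩
      have hlogpos : 0 ≤ Real.log (A₀ / z) := Real.log_nonneg
        ((one_le_div hz1).mpr (le_trans hz2.le hz₀A))
      refine ⟨Real.sqrt (w ^ 2 / 2 * Real.log (A₀ / z)), ?_, ?_⟩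
      · show R < Real.sqrt (w ^ 2 / 2 * Real.log (A₀ / z))
        rw [hR]
        apply Real.sqrt_lt_sqrt hR2nn
        rw [hR2]
        apply mul_lt_mul_of_pos_left _ (by positivity : (0:ℝ) < w ^ 2 / 2)
        apply Real.log_lt_log (by positivity)
        exact div_lt_div_of_pos_left hA hz1 hz2
      · exact aux_phi_eq w A₀ z hw2 hA hz1 hlogpos
  have h9 : (∫ r in Ioi R, |φd r| • ψ (φf r)) = ∫ z in Ioo (0:ℝ) z₀, ψ z := by
    rw [← h8]
    refine (integral_image_eq_integral_abs_deriv_smul measurableSet_Ioi ?_ ?_ ψ).symm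
    · intro r _
      exact (aux_hasDeriv w A₀ r).hasDerivWithinAt
    · exact (hanti.injOn).mono (fun x (hx : R < x) => mem_Ici.mpr (hRnn.trans hx.le))
  have h10 : (∫ z in Ioo (0:ℝ) z₀, ψ z) = ∫ z in (0:ℝ)..z₀, ψ z := by
    rw [intervalIntegral.integral_of_le hz₀.le, integral_Ioc_eq_integral_Ioo]
  calc _ = ∫ u, F u := h1
    _ = _ := by rw [h2, h3, h4, h5, h7, h9, h10]
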